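/- arXiv:1203.4350 — 3 statements merged into one kernel-verified Lean document; each statement's English description precedes it below -/
import Mathlib

section
/- Let ω = (ω₁, ω₂, ω₃) ∈ ℝ³ with all ωᵢ nonzero, and suppose 1/ω₁, 1/ω₂, 1/ω₃ are linearly independent over ℚ. Then there do not exist real numbers x, y, z and integers a, b, c, d such that the three points (x,0,0), (a,y,b), (c,d,z) are distinct and collinear with direction vector ω. -/
/-- A B-irrational direction admits no line through three edge-types:
    there are no distinct collinear points (x,0,0), (a,y,b), (c,d,z)
    with a,b,c,d integers and direction vector ω. -/
theorem no_triple_diagonal_of_B_irrational (ω₁ ω₂ ω₃ : ℝ)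
    (h1 : ω₁ ≠ 0) (h2 : ω₂ ≠ 0) (h3 : ω₃ ≠ 0)
    (hB : LinearIndependent ℚ ![ω₁⁻¹, ω₂⁻¹, ω₃⁻¹]) :
    ¬ ∃ (x y z : ℝ) (a b c d : ℤ) (s t : ℝ),
      (![x, 0, 0] : Fin 3 → ℝ) ≠ ![(a : ℝ), y, (b : ℝ)] ∧
      (![(a : ℝ), y, (b : ℝ)] : Fin 3 → ℝ) ≠ ![(c : ℝ), (d : ℝ), z] ∧
      (![x, 0, 0] : Fin 3 → ℝ) ≠ ![(c : ℝ), (d : ℝ), z] ∧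
      (![(a : ℝ), y, (b : ℝ)] - ![x, 0, 0] : Fin 3 → ℝ) = s • ![ω₁, ω₂, ω₃] ∧
      (![(c : ℝ), (d : ℝ), z] - ![x, 0, 0] : Fin 3 → ℝ) = t • ![ω₁, ω₂, ω₃] := by
  rintro ⟨x, y, z, a, b, c, d, s, t, h12, h23, h13, hs, ht⟩
  have hs0 := congrFun hs 0
  have hs1 := congrFun hs 1
  have hs2 := congrFun hs 2
  have ht0 := congrFun ht 0
  have ht1 := congrFun ht 1
  have ht2 := congrFun ht 2
  simp only [Pi.sub_apply, Pi.smul_apply, Matrix.cons_val_zero, Matrix.cons_val_one,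
    Matrix.head_cons, Matrix.cons_val_two, Matrix.tail_cons, smul_eq_mul, sub_zero] at hs0 hs1 hs2 ht0 ht1 ht2
  -- hs0 : a - x = s*ω₁, hs1 : y = s*ω₂, hs2 : b = s*ω₃
  -- ht0 : c - x = t*ω₁, ht1 : d = t*ω₂, ht2 : z = t*ω₃
  have key : ((a - c : ℚ) : ℝ) * ω₁⁻¹ + ((d : ℚ) : ℝ) * ω₂⁻¹ + ((-b : ℚ) : ℝ) * ω₃⁻¹ = 0 := by
    have hs' : s = (b : ℝ) / ω₃ := by field_simp [hs2]; exact hs2.symm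
    have ht' : t = (d : ℝ) / ω₂ := by field_simp [ht1]; exact ht1.symm
    have hac : (a : ℝ) - c = (s - t) * ω₁ := by
      rw [sub_mul, ← hs0, ← ht0]; ring
    rw [hs', ht'] at hac
    push_cast
    field_simp at hac ⊢
    nlinarith [hac]
  have hzero := Fintype.linearIndependent_iff.mp hB ![(a - c : ℚ), (d : ℚ), (-b : ℚ)] (by
    push_cast at key
    simp [Fin.sum_univ_three, Rat.smul_def]
    linarith [key])
  have ha : (a : ℚ) - c = 0 := by simpa using hzero 0
  have hd : (d : ℚ) = 0 := by simpa using hzero 1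
  have hb : (b : ℚ) = 0 := by simpa using hzero 2
  have hb0 : (b : ℝ) = 0 := by exact_mod_cast hb
  have hs0' : s = 0 := by
    have := hs2; rw [hb0] at this
    rcases mul_eq_zero.mp this.symm with h | h
    · exact h
    · exact absurd h h3
  have hy : y = 0 := by rw [hs1, hs0', zero_mul]
  have hx : x = (a : ℝ) := by
    have := hs0; rw [hs0', zero_mul, sub_eq_zero] at this; exact this.symm
  apply h12
  rw [hx, hy, hb0]
end

section
/- The three points P₁ = (π/6, 0, 0), P₂ = (1, 1, (6-π)/(12-π)), P₃ = (2, (12-π)/(6-π), 1) in ℝ³ are collinear, with common direction vector ω = (1 - π/6, 1, (6-π)/(12-π)). -/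
open Real

/-- The points (π/6,0,0), (1,1,(6-π)/(12-π)), (2,(12-π)/(6-π),1) are collinear
    with direction ω = (1-π/6, 1, (6-π)/(12-π)). -/
theorem explicit_collinear_triple :
    ∃ s t : ℝ, 0 < s ∧ 0 < t ∧
      (![(1 : ℝ), 1, (6 - π) / (12 - π)] - ![π / 6, 0, 0] : Fin 3 → ℝ)
        = s • ![1 - π / 6, 1, (6 - π) / (12 - π)] ∧
      (![(2 : ℝ), (12 - π) / (6 - π), 1] - ![(1 : ℝ), 1, (6 - π) / (12 - π)] : Fin 3 → ℝ)
        = t • ![1 - π / 6, 1, (6 - π) / (12 - π)] := by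
  have h6 : (0:ℝ) < 6 - π := by linarith [pi_le_four]
  have h12 : (0:ℝ) < 12 - π := by linarith [pi_le_four]
  refine ⟨1, 6 / (6 - π), one_pos, by positivity, ?_, ?_⟩ <;>
    funext i <;> fin_cases i <;>
    simp [Matrix.cons_val_zero, Matrix.cons_val_one] <;>
    field_simp <;> ring
end

section
/- Cassaigne's bispecial identity: for a factorial extendable language L over a finite alphabet with complexity p(n) and s(n) = p(n+1) - p(n), one has s(n+1) - s(n) = Σ_{v bispecial of length n} (m_b(v) - m_r(v) - m_l(v) + 1), where m_r(v), m_l(v), m_b(v) count right, left, and two-sided extensions of v in L. -/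
/-- Number of right extensions of `v` in the language `L`. -/
noncomputable def mR {A : Type*} (L : Set (List A)) (v : List A) : ℕ :=
  Nat.card {a : A | v ++ [a] ∈ L}

/-- Number of left extensions of `v` in the language `L`. -/
noncomputable def mL {A : Type*} (L : Set (List A)) (v : List A) : ℕ :=
  Nat.card {b : A | b :: v ∈ L}

/-- Number of two-sided extensions of `v` in the language `L`. -/
noncomputable def mB {A : Type*} (L : Set (List A)) (v : List A) : ℕ :=
  Nat.card {p : A × A | p.2 :: (v ++ [p.1]) ∈ L}

/-- Complexity function of the language `L`. -/
noncomputable def complexityFn {A : Type*} (L : Set (List A)) (n : ℕ) : ℕ :=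
  Nat.card {w : List A | w ∈ L ∧ w.length = n}

section CassaigneAux

variable {A : Type*} [Fintype A]

open scoped Classical in
/-- Right-extension letters as a Finset. -/
noncomputable def ERf (L : Set (List A)) (v : List A) : Finset A :=
  Finset.univ.filter fun a => v ++ [a] ∈ L

open scoped Classical in
/-- Left-extension letters as a Finset. -/
noncomputable def ELf (L : Set (List A)) (v : List A) : Finset A :=
  Finset.univ.filter fun b => b :: v ∈ L

open scoped Classical in
/-- Two-sided-extension letter pairs as a Finset. -/
noncomputable def EBf (L : Set (List A)) (v : List A) : Finset (A × A) :=
  Finset.univ.filter fun p => p.2 :: (v ++ [p.1]) ∈ L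

/-- Words of `L` of length `n` as a Finset. -/
noncomputable def Wf (L : Set (List A)) (n : ℕ) : Finset (List A) :=
  (Set.Finite.subset (List.finite_length_eq A n) (fun _ hw => hw.2)
    : {w : List A | w ∈ L ∧ w.length = n}.Finite).toFinset

lemma mem_ERf {L : Set (List A)} {v : List A} {a : A} : a ∈ ERf L v ↔ v ++ [a] ∈ L := by
  classical simp [ERf]

lemma mem_ELf {L : Set (List A)} {v : List A} {b : A} : b ∈ ELf L v ↔ b :: v ∈ L := by
  classical simp [ELf]

lemma mem_EBf {L : Set (List A)} {v : List A} {p : A × A} :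
    p ∈ EBf L v ↔ p.2 :: (v ++ [p.1]) ∈ L := by
  classical simp [EBf]

lemma mem_Wf {L : Set (List A)} {n : ℕ} {w : List A} :
    w ∈ Wf L n ↔ w ∈ L ∧ w.length = n := by
  simp [Wf]

lemma mR_eq {L : Set (List A)} (v : List A) : mR L v = (ERf L v).card := by
  classical
  rw [mR, Nat.card_coe_set_eq, Set.ncard_eq_toFinset_card']
  simp [ERf, Set.toFinset_setOf]

lemma mL_eq {L : Set (List A)} (v : List A) : mL L v = (ELf L v).card := by
  classical
  rw [mL, Nat.card_coe_set_eq, Set.ncard_eq_toFinset_card']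
  simp [ELf, Set.toFinset_setOf]

lemma mB_eq {L : Set (List A)} (v : List A) : mB L v = (EBf L v).card := by
  classical
  rw [mB, Nat.card_coe_set_eq, Set.ncard_eq_toFinset_card']
  simp [EBf, Set.toFinset_setOf]

lemma complexityFn_eq (L : Set (List A)) (n : ℕ) : complexityFn L n = (Wf L n).card := by
  rw [complexityFn, Nat.card_coe_set_eq,
    Set.ncard_eq_toFinset_card _ ((List.finite_length_eq A n).subset fun _ hw => hw.2)]
  rfl

variable {L : Set (List A)}

/-- Counting words of length `n+1` by their last letter. -/
lemma card_Wf_succ_right (hfac : ∀ u w : List A, u <:+: w → w ∈ L → u ∈ L) (n : ℕ) :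
    (Wf L (n + 1)).card = ∑ v ∈ Wf L n, mR L v := by
  classical
  rw [Finset.card_eq_sum_card_fiberwise (f := fun w => w.dropLast) (t := Wf L n)
    (fun w hw => by
      rw [Finset.mem_coe, mem_Wf] at hw ⊢
      exact ⟨hfac _ _ (List.dropLast_prefix w).isInfix hw.1, by simp [hw.2]⟩)]
  refine Finset.sum_congr rfl fun v hv => ?_
  rw [mem_Wf] at hv
  have himg : (Wf L (n + 1)).filter (fun w => w.dropLast = v)
      = (ERf L v).image (fun a => v ++ [a]) := by
    ext w
    simp only [Finset.mem_filter, Finset.mem_image, mem_Wf, mem_ERf]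
    constructor
    · rintro ⟨⟨hwL, hlen⟩, hdrop⟩
      have hne : w ≠ [] := by intro h; simp [h] at hlen
      refine ⟨w.getLast hne, ?_, ?_⟩
      · rw [← hdrop, List.dropLast_append_getLast hne]; exact hwL
      · rw [← hdrop, List.dropLast_append_getLast hne]
    · rintro ⟨a, haL, rfl⟩
      exact ⟨⟨haL, by simp [hv.2]⟩, List.dropLast_concat⟩
  rw [himg, Finset.card_image_of_injective _
    (fun a a' h => by simpa using List.append_cancel_left h), mR_eq]

/-- Counting words of length `n+1` by their first letter. -/
lemma card_Wf_succ_left (hfac : ∀ u w : List A, u <:+: w → w ∈ L → u ∈ L) (n : ℕ) :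
    (Wf L (n + 1)).card = ∑ v ∈ Wf L n, mL L v := by
  classical
  rw [Finset.card_eq_sum_card_fiberwise (f := fun w => w.tail) (t := Wf L n)
    (fun w hw => by
      rw [Finset.mem_coe, mem_Wf] at hw ⊢
      exact ⟨hfac _ _ (List.tail_suffix w).isInfix hw.1, by simp [hw.2]⟩)]
  refine Finset.sum_congr rfl fun v hv => ?_
  rw [mem_Wf] at hv
  have himg : (Wf L (n + 1)).filter (fun w => w.tail = v)
      = (ELf L v).image (fun b => b :: v) := by
    ext w
    simp only [Finset.mem_filter, Finset.mem_image, mem_Wf, mem_ELf]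
    constructor
    · rintro ⟨⟨hwL, hlen⟩, htail⟩
      have hne : w ≠ [] := by intro h; simp [h] at hlen
      refine ⟨w.head hne, ?_, ?_⟩
      · rw [← htail, List.cons_head_tail]; exact hwL
      · rw [← htail, List.cons_head_tail]
    · rintro ⟨b, hbL, rfl⟩
      exact ⟨⟨hbL, by simp [hv.2]⟩, rfl⟩
  rw [himg, Finset.card_image_of_injective _
    (fun b b' h => by injection h), mL_eq]

/-- Counting words of length `n+2` by their first and last letters. -/
lemma card_Wf_succ_succ (hfac : ∀ u w : List A, u <:+: w → w ∈ L → u ∈ L) (n : ℕ) :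
    (Wf L (n + 2)).card = ∑ v ∈ Wf L n, mB L v := by
  classical
  rw [Finset.card_eq_sum_card_fiberwise (f := fun w => w.tail.dropLast) (t := Wf L n)
    (fun w hw => by
      rw [Finset.mem_coe, mem_Wf] at hw ⊢
      refine ⟨hfac _ _ ?_ hw.1, by simp [hw.2]⟩
      exact ((List.dropLast_prefix w.tail).isInfix.trans (List.tail_suffix w).isInfix))]
  refine Finset.sum_congr rfl fun v hv => ?_
  rw [mem_Wf] at hv
  have himg : (Wf L (n + 2)).filter (fun w => w.tail.dropLast = v)
      = (EBf L v).image (fun p : A × A => p.2 :: (v ++ [p.1])) := by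
    ext w
    simp only [Finset.mem_filter, Finset.mem_image, mem_Wf, mem_EBf]
    constructor
    · rintro ⟨⟨hwL, hlen⟩, hdrop⟩
      have hne : w ≠ [] := by intro h; simp [h] at hlen
      have htne : w.tail ≠ [] := by
        intro h
        have := List.length_tail (l := w)
        rw [h] at this
        simp [hlen] at this
      refine ⟨(w.tail.getLast htne, w.head hne), ?_, ?_⟩
      · show w.head hne :: (v ++ [w.tail.getLast htne]) ∈ L
        rw [← hdrop, List.dropLast_append_getLast htne, List.cons_head_tail]
        exact hwL
      · show w.head hne :: (v ++ [w.tail.getLast htne]) = w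
        rw [← hdrop, List.dropLast_append_getLast htne, List.cons_head_tail]
    · rintro ⟨⟨a, b⟩, hab, rfl⟩
      refine ⟨⟨hab, by simp [hv.2]⟩, ?_⟩
      show (v ++ [a]).dropLast = v
      exact List.dropLast_concat
  rw [himg, Finset.card_image_of_injective _ ?_, mB_eq]
  rintro ⟨a, b⟩ ⟨a', b'⟩ h
  simp only at h
  injection h with h1 h2
  have := List.append_cancel_left h2
  simp only [List.cons.injEq, and_true] at this
  exact Prod.ext (by simpa using this) h1

/-- Terms corresponding to non-bispecial words vanish. -/
lemma vanish (hfac : ∀ u w : List A, u <:+: w → w ∈ L → u ∈ L)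
    (hext : ∀ w ∈ L, (∃ a : A, w ++ [a] ∈ L) ∧ (∃ b : A, b :: w ∈ L))
    {v : List A} (hvL : v ∈ L) (hnot : ¬ (2 ≤ mR L v ∧ 2 ≤ mL L v)) :
    (mB L v : ℤ) - mR L v - mL L v + 1 = 0 := by
  classical
  have hR1 : 1 ≤ mR L v := by
    rw [mR_eq]
    obtain ⟨a, ha⟩ := (hext v hvL).1
    exact Finset.card_pos.2 ⟨a, mem_ERf.2 ha⟩
  have hL1 : 1 ≤ mL L v := by
    rw [mL_eq]
    obtain ⟨b, hb⟩ := (hext v hvL).2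
    exact Finset.card_pos.2 ⟨b, mem_ELf.2 hb⟩
  have hcase : mR L v = 1 ∨ mL L v = 1 := by omega
  rcases hcase with h1 | h1
  · -- m_r = 1 : every left extension matches a unique right letter, so mB = mL
    obtain ⟨a0, ha0⟩ := Finset.card_eq_one.1 (show (ERf L v).card = 1 by rw [← mR_eq]; exact h1)
    have hEB : EBf L v = (ELf L v).image (fun b => (a0, b)) := by
      ext ⟨a, b⟩
      simp only [mem_EBf, Finset.mem_image, mem_ELf]
      constructor
      · intro h
        have haE : a ∈ ERf L v :=
          mem_ERf.2 (hfac _ _ (List.suffix_cons b (v ++ [a])).isInfix h)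
        have ha : a = a0 := by rw [ha0] at haE; simpa using haE
        have hb : b :: v ∈ L := by
          refine hfac _ _ ?_ h
          have hpre : b :: v <+: b :: (v ++ [a]) := ⟨[a], by simp⟩
          exact hpre.isInfix
        exact ⟨b, hb, by rw [ha]⟩
      · rintro ⟨b', hb', heq⟩
        rw [Prod.mk.injEq] at heq
        obtain ⟨rfl, rfl⟩ := heq
        obtain ⟨a', ha'⟩ := (hext (b' :: v) hb').1
        rw [List.cons_append] at ha'
        have haE : a' ∈ ERf L v :=
          mem_ERf.2 (hfac _ _ (List.suffix_cons b' (v ++ [a'])).isInfix ha')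
        have ha'0 : a' = a0 := by rw [ha0] at haE; simpa using haE
        rw [← ha'0]
        exact ha'
    have hBL : mB L v = mL L v := by
      rw [mB_eq, mL_eq, hEB, Finset.card_image_of_injective _
        (fun b b' h => by simpa using h)]
    rw [hBL, h1]
    push_cast
    ring
  · -- m_l = 1
    obtain ⟨b0, hb0⟩ := Finset.card_eq_one.1 (show (ELf L v).card = 1 by rw [← mL_eq]; exact h1)
    have hEB : EBf L v = (ERf L v).image (fun a => (a, b0)) := by
      ext ⟨a, b⟩
      simp only [mem_EBf, Finset.mem_image, mem_ERf]
      constructor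
      · intro h
        have hbE : b ∈ ELf L v := by
          refine mem_ELf.2 (hfac _ _ ?_ h)
          have : b :: v <+: b :: (v ++ [a]) := ⟨[a], by simp⟩
          exact this.isInfix
        have hb : b = b0 := by rw [hb0] at hbE; simpa using hbE
        have ha : v ++ [a] ∈ L :=
          hfac _ _ (List.suffix_cons b (v ++ [a])).isInfix h
        exact ⟨a, ha, by rw [hb]⟩
      · rintro ⟨a', ha', heq⟩
        rw [Prod.mk.injEq] at heq
        obtain ⟨rfl, rfl⟩ := heq
        obtain ⟨b', hb'⟩ := (hext (v ++ [a']) ha').2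
        have hbE : b' ∈ ELf L v := by
          refine mem_ELf.2 (hfac _ _ ?_ hb')
          have hpre : b' :: v <+: b' :: (v ++ [a']) := ⟨[a'], by simp⟩
          exact hpre.isInfix
        have : b' = b0 := by rw [hb0] at hbE; simpa using hbE
        rw [← this]
        exact hb'
    have hBR : mB L v = mR L v := by
      rw [mB_eq, mR_eq, hEB, Finset.card_image_of_injective _
        (fun a a' h => by simpa using h)]
    rw [hBR, h1]
    push_cast
    ring

end CassaigneAux

/-- Cassaigne's bispecial identity: the second difference of the complexity of a
    factorial extendable language equals the sum over bispecial words `v` of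
    length `n` of `m_b(v) - m_r(v) - m_l(v) + 1`. -/
theorem cassaigne_bispecial_identity {A : Type*} [Fintype A] (L : Set (List A))
    (hfac : ∀ u w : List A, u <:+: w → w ∈ L → u ∈ L)
    (hext : ∀ w ∈ L, (∃ a : A, w ++ [a] ∈ L) ∧ (∃ b : A, b :: w ∈ L))
    (n : ℕ) :
    ((complexityFn L (n + 2) : ℤ) - complexityFn L (n + 1)) -
        ((complexityFn L (n + 1) : ℤ) - complexityFn L n)
      = ∑ᶠ v ∈ {v : List A | v ∈ L ∧ v.length = n ∧ 2 ≤ mR L v ∧ 2 ≤ mL L v},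
          ((mB L v : ℤ) - mR L v - mL L v + 1) := by
  classical
  have hBset : {v : List A | v ∈ L ∧ v.length = n ∧ 2 ≤ mR L v ∧ 2 ≤ mL L v}
      = ↑((Wf L n).filter fun v => 2 ≤ mR L v ∧ 2 ≤ mL L v) := by
    ext v
    simp only [Set.mem_setOf_eq, Finset.coe_filter, mem_Wf]
    tauto
  rw [hBset, finsum_mem_coe_finset,
    Finset.sum_filter_of_ne (fun v hv hne => by
      by_contra hnot
      exact hne (vanish hfac hext (mem_Wf.1 hv).1 hnot))]
  have h2 : ((complexityFn L (n + 2) : ℤ)) = ∑ v ∈ Wf L n, (mB L v : ℤ) := by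
    rw [complexityFn_eq, card_Wf_succ_succ hfac]
    push_cast
    rfl
  have hr : ((complexityFn L (n + 1) : ℤ)) = ∑ v ∈ Wf L n, (mR L v : ℤ) := by
    rw [complexityFn_eq, card_Wf_succ_right hfac]
    push_cast
    rfl
  have hl : ((complexityFn L (n + 1) : ℤ)) = ∑ v ∈ Wf L n, (mL L v : ℤ) := by
    rw [complexityFn_eq, card_Wf_succ_left hfac]
    push_cast
    rfl
  have h0 : ((complexityFn L n : ℤ)) = ∑ v ∈ Wf L n, (1 : ℤ) := by
    rw [complexityFn_eq]
    simp
  rw [h2, h0]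
  nth_rewrite 1 [hr]
  rw [hl]
  simp only [← Finset.sum_sub_distrib, ← Finset.sum_add_distrib]
  exact Finset.sum_congr rfl fun x _ => by ring
end
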